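/- Let γ, ρ, σ, a₁, a₂ be real numbers with a₁, a₂ ≠ 0 and set R := a₁/a₂. Define the four branch functions μ₁(θ) = cos((π/2−σ)γ)·cos((θ−π/2+ρ)γ), μ₂(θ) = cos(ργ)·cos((θ−π+σ)γ), μ₃(θ) = cos(σγ)·cos((θ−π−ρ)γ), μ₄(θ) = cos((π/2−ρ)γ)·cos((θ−3π/2−σ)γ). Then: (i) unconditionally, μ₁(π/2) = μ₂(π/2), μ₂(π) = μ₃(π), μ₃(3π/2) = μ₄(3π/2), and μ₁(0) = μ₄(2π); and (ii) if cos(ργ), sin(ργ), cos(σγ), sin(σγ), cos((π/2−σ)γ), sin((π/2−σ)γ), cos((π/2−ρ)γ), sin((π/2−ρ)γ) are all nonzero and the three relations R = −tan((π/2−σ)γ)·cot(ργ), 1/R = −tan(ργ)·cot(σγ), and R = −tan(σγ)·cot((π/2−ρ)γ) hold, then the flux transmission conditions hold: a₁·μ₁′(π/2) = a₂·μ₂′(π/2), a₂·μ₂′(π) = a₁·μ₃′(π), a₁·μ₃′(3π/2) = a₂·μ₄′(3π/2), and a₂·μ₄′(2π) = a₁·μ₁′(0), where μⱼ′ denotes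 the derivative with respect to θ. -/

import Mathlib

open Real

lemma kellogg_deriv_mul_cos (c b γ x : ℝ) :
    deriv (fun θ : ℝ => c * Real.cos ((θ + b) * γ)) x = -(c * γ * Real.sin ((x + b) * γ)) := by
  have h : HasDerivAt (fun θ : ℝ => c * Real.cos ((θ + b) * γ))
      (c * (-Real.sin ((x + b) * γ) * (1 * γ))) x :=
    ((((hasDerivAt_id' (x := x)).add_const b).mul_const γ).cos).const_mul c
  rw [h.deriv]; ring

lemma kellogg_alg (s1 c1 s2 c2 S1 C1 S2 C2 a₁ a₂ : ℝ) (ha₁ : a₁ ≠ 0) (ha₂ : a₂ ≠ 0)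
    (hc1 : c1 ≠ 0) (hs1 : s1 ≠ 0) (hc2 : c2 ≠ 0) (hs2 : s2 ≠ 0)
    (hC1 : C1 ≠ 0) (hS1 : S1 ≠ 0) (hC2 : C2 ≠ 0) (hS2 : S2 ≠ 0)
    (h1 : a₁ / a₂ = -(S1 / C1) * (c1 / s1))
    (h2 : 1 / (a₁ / a₂) = -(s1 / c1) * (c2 / s2))
    (h3 : a₁ / a₂ = -(s2 / c2) * (C2 / S2)) :
    (a₁ * (C1 * s1) = -(a₂ * (S1 * c1)) ∧
     a₂ * (c1 * s2) = -(a₁ * (s1 * c2)) ∧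
     a₁ * (c2 * S2) = -(a₂ * (s2 * C2)) ∧
     a₂ * (C2 * S1) = -(a₁ * (C1 * S2))) := by
  field_simp at h1 h2 h3
  refine ⟨by linear_combination h1, by linear_combination h2, by linear_combination h3, ?_⟩
  have key : c1 * S2 = s1 * C2 := by
    apply mul_left_cancel₀ (mul_ne_zero ha₁ hc2)
    linear_combination c1 * h3 - C2 * h2
  apply mul_left_cancel₀ hc1
  linear_combination C2 * h1 + a₁ * C1 * key

/-- Kellogg's formulas (Section 3.2): the piecewise angular factor `μ` built from the four
branches `μ₁,…,μ₄` is continuous at the quadrant interfaces (i), and, under the nonlinear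
relations among `γ, ρ, σ, R = a₁/a₂`, the flux transmission conditions
`aᵢ μⱼ′ = aⱼ μⱼ₊₁′` hold at the interfaces (ii). -/
theorem stmt_12 (γ ρ σ a₁ a₂ : ℝ) (ha₁ : a₁ ≠ 0) (ha₂ : a₂ ≠ 0)
    (R : ℝ) (hR : R = a₁ / a₂)
    (μ₁ μ₂ μ₃ μ₄ : ℝ → ℝ)
    (hμ₁ : ∀ θ, μ₁ θ = cos ((π / 2 - σ) * γ) * cos ((θ - π / 2 + ρ) * γ))
    (hμ₂ : ∀ θ, μ₂ θ = cos (ρ * γ) * cos ((θ - π + σ) * γ))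
    (hμ₃ : ∀ θ, μ₃ θ = cos (σ * γ) * cos ((θ - π - ρ) * γ))
    (hμ₄ : ∀ θ, μ₄ θ = cos ((π / 2 - ρ) * γ) * cos ((θ - 3 * π / 2 - σ) * γ)) :
    (μ₁ (π / 2) = μ₂ (π / 2) ∧ μ₂ π = μ₃ π ∧ μ₃ (3 * π / 2) = μ₄ (3 * π / 2) ∧
      μ₁ 0 = μ₄ (2 * π)) ∧
    ((cos (ρ * γ) ≠ 0 → sin (ρ * γ) ≠ 0 → cos (σ * γ) ≠ 0 → sin (σ * γ) ≠ 0 →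
      cos ((π / 2 - σ) * γ) ≠ 0 → sin ((π / 2 - σ) * γ) ≠ 0 →
      cos ((π / 2 - ρ) * γ) ≠ 0 → sin ((π / 2 - ρ) * γ) ≠ 0 →
      R = -tan ((π / 2 - σ) * γ) * Real.cot (ρ * γ) →
      1 / R = -tan (ρ * γ) * Real.cot (σ * γ) →
      R = -tan (σ * γ) * Real.cot ((π / 2 - ρ) * γ) →
        a₁ * deriv μ₁ (π / 2) = a₂ * deriv μ₂ (π / 2) ∧
        a₂ * deriv μ₂ π = a₁ * deriv μ₃ π ∧
        a₁ * deriv μ₃ (3 * π / 2) = a₂ * deriv μ₄ (3 * π / 2) ∧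
        a₂ * deriv μ₄ (2 * π) = a₁ * deriv μ₁ 0)) := by
  constructor
  · refine ⟨?_, ?_, ?_, ?_⟩
    · rw [hμ₁, hμ₂, show ((π : ℝ) / 2 - π / 2 + ρ) * γ = ρ * γ by ring,
        show ((π : ℝ) / 2 - π + σ) * γ = -((π / 2 - σ) * γ) by ring, Real.cos_neg]
      ring
    · rw [hμ₂, hμ₃, show ((π : ℝ) - π + σ) * γ = σ * γ by ring,
        show ((π : ℝ) - π - ρ) * γ = -(ρ * γ) by ring, Real.cos_neg]
      ring
    · rw [hμ₃, hμ₄, show (3 * (π : ℝ) / 2 - π - ρ) * γ = (π / 2 - ρ) * γ by ring,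
        show (3 * (π : ℝ) / 2 - 3 * π / 2 - σ) * γ = -(σ * γ) by ring, Real.cos_neg]
      ring
    · rw [hμ₁, hμ₄, show ((0 : ℝ) - π / 2 + ρ) * γ = -((π / 2 - ρ) * γ) by ring,
        show (2 * (π : ℝ) - 3 * π / 2 - σ) * γ = (π / 2 - σ) * γ by ring, Real.cos_neg]
      ring
  · intro hc1 hs1 hc2 hs2 hC1 hS1 hC2 hS2 h1 h2 h3
    rw [hR, Real.tan_eq_sin_div_cos, Real.cot_eq_cos_div_sin] at h1 h2 h3
    obtain ⟨hA, hB, hC, hD⟩ := kellogg_alg (sin (ρ * γ)) (cos (ρ * γ)) (sin (σ * γ))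
      (cos (σ * γ)) (sin ((π / 2 - σ) * γ)) (cos ((π / 2 - σ) * γ))
      (sin ((π / 2 - ρ) * γ)) (cos ((π / 2 - ρ) * γ)) a₁ a₂ ha₁ ha₂
      hc1 hs1 hc2 hs2 hC1 hS1 hC2 hS2 h1 h2 h3
    have e₁ : μ₁ = fun θ : ℝ => cos ((π / 2 - σ) * γ) * cos ((θ + (ρ - π / 2)) * γ) :=
      funext fun θ => by rw [hμ₁, show (θ - π / 2 + ρ) * γ = (θ + (ρ - π / 2)) * γ by ring]
    have e₂ : μ₂ = fun θ : ℝ => cos (ρ * γ) * cos ((θ + (σ - π)) * γ) :=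
      funext fun θ => by rw [hμ₂, show (θ - π + σ) * γ = (θ + (σ - π)) * γ by ring]
    have e₃ : μ₃ = fun θ : ℝ => cos (σ * γ) * cos ((θ + (-π - ρ)) * γ) :=
      funext fun θ => by rw [hμ₃, show (θ - π - ρ) * γ = (θ + (-π - ρ)) * γ by ring]
    have e₄ : μ₄ = fun θ : ℝ => cos ((π / 2 - ρ) * γ) * cos ((θ + (-(3 * π / 2) - σ)) * γ) :=
      funext fun θ => by
        rw [hμ₄, show (θ - 3 * π / 2 - σ) * γ = (θ + (-(3 * π / 2) - σ)) * γ by ring]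
    rw [e₁, e₂, e₃, e₄]
    rw [kellogg_deriv_mul_cos, kellogg_deriv_mul_cos, kellogg_deriv_mul_cos,
      kellogg_deriv_mul_cos, kellogg_deriv_mul_cos, kellogg_deriv_mul_cos,
      kellogg_deriv_mul_cos, kellogg_deriv_mul_cos]
    rw [show ((π : ℝ) / 2 + (ρ - π / 2)) * γ = ρ * γ by ring,
      show ((π : ℝ) / 2 + (σ - π)) * γ = -((π / 2 - σ) * γ) by ring,
      show ((π : ℝ) + (σ - π)) * γ = σ * γ by ring,
      show ((π : ℝ) + (-π - ρ)) * γ = -(ρ * γ) by ring,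
      show (3 * (π : ℝ) / 2 + (-π - ρ)) * γ = (π / 2 - ρ) * γ by ring,
      show (3 * (π : ℝ) / 2 + (-(3 * π / 2) - σ)) * γ = -(σ * γ) by ring,
      show (2 * (π : ℝ) + (-(3 * π / 2) - σ)) * γ = (π / 2 - σ) * γ by ring,
      show ((0 : ℝ) + (ρ - π / 2)) * γ = -((π / 2 - ρ) * γ) by ring,
      Real.sin_neg, Real.sin_neg, Real.sin_neg, Real.sin_neg]
    exact ⟨by linear_combination (-γ) * hA, by linear_combination (-γ) * hB,
      by linear_combination (-γ) * hC, by linear_combination (-γ) * hD⟩
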